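/- Assume the equation x(k+1) = A(k)x(k) has an exponential dichotomy on ℤ₋ with projection P(k). Fix m ∈ ℤ₋ and let W be any subspace of ℝⁿ with W ⊕ N(P(m)) = ℝⁿ such that N(Φ(0,m)) ⊆ W (here Φ(0,m) = A(−1)···A(m) and N(Φ(0,m)) is its nullspace). Then there exists a projection family Q(k), k ∈ ℤ₋, satisfying the invariance Q(k+1)A(k) = A(k)Q(k), such that N(Q(m)) = N(P(m)), R(Q(m)) = W, and the equation has an exponential dichotomy on ℤ₋ with projection Q(k). -/

import Mathlib

noncomputable section

open scoped BigOperators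

/-- ℝⁿ as a Euclidean space. -/
abbrev Euc (n : ℕ) := EuclideanSpace ℝ (Fin n)

/-- The transition matrix `Φ(k,m) = A(k-1) ⋯ A(m)`, with `Φ(m,m) = 1`
(and `Φ(k,m) = 1` when `k ≤ m`). -/
def Phi {n : ℕ} (A : ℤ → (Euc n →L[ℝ] Euc n)) (k m : ℤ) : Euc n →L[ℝ] Euc n :=
  (((List.range (k - m).toNat).map fun i => A (m + i)).reverse).prod

/-- `J` is an interval of integers. -/
def IsIntInterval (J : Set ℤ) : Prop :=
  ∀ ⦃a b c : ℤ⦄, a ∈ J → b ∈ J → a ≤ c → c ≤ b → c ∈ J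

/-- The equation `x(k+1) = A(k) x(k)` has an exponential dichotomy on `J` with
projection family `P`, constant `K` and exponent `α`. -/
structure ExpDichotomyOn {n : ℕ} (A : ℤ → (Euc n →L[ℝ] Euc n)) (J : Set ℤ)
    (P : ℤ → (Euc n →L[ℝ] Euc n)) (K α : ℝ) : Prop where
  one_le_K : 1 ≤ K
  alpha_pos : 0 < α
  proj : ∀ k ∈ J, P k ∘L P k = P k
  rank_const : ∀ k ∈ J, ∀ m ∈ J,
    Module.finrank ℝ (LinearMap.range (P k : Euc n →ₗ[ℝ] Euc n)) = Module.finrank ℝ (LinearMap.range (P m : Euc n →ₗ[ℝ] Euc n))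
  invariance : ∀ m ∈ J, ∀ k ∈ J, m ≤ k → Phi A k m ∘L P m = P k ∘L Phi A k m
  forward : ∀ m ∈ J, ∀ k ∈ J, m ≤ k →
    ‖Phi A k m ∘L P m‖ ≤ K * Real.exp (-α * ((k : ℝ) - (m : ℝ)))
  bijOn : ∀ k : ℤ, k ∈ J → k + 1 ∈ J →
    Set.BijOn (A k) (LinearMap.ker (P k : Euc n →ₗ[ℝ] Euc n) : Set (Euc n)) (LinearMap.ker (P (k + 1) : Euc n →ₗ[ℝ] Euc n) : Set (Euc n))
  backward : ∃ Ψ : ℤ → ℤ → (Euc n →L[ℝ] Euc n), ∀ m ∈ J, ∀ k ∈ J, m ≤ k →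
    (∀ x ∈ LinearMap.ker (P m : Euc n →ₗ[ℝ] Euc n), Ψ m k (Phi A k m x) = x) ∧
    (∀ x ∈ LinearMap.ker (P k : Euc n →ₗ[ℝ] Euc n), Ψ m k x ∈ LinearMap.ker (P m : Euc n →ₗ[ℝ] Euc n) ∧ Phi A k m (Ψ m k x) = x) ∧
    ‖Ψ m k ∘L (1 - P k)‖ ≤ K * Real.exp (-α * ((k : ℝ) - (m : ℝ)))

namespace St9
variable {n : ℕ}


variable {n : ℕ}

theorem phi_self (A : ℤ → (Euc n →L[ℝ] Euc n)) (m : ℤ) : Phi A m m = 1 := by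
  simp [Phi]

theorem phi_succ (A : ℤ → (Euc n →L[ℝ] Euc n)) {k m : ℤ} (h : m ≤ k) :
    Phi A (k + 1) m = A k ∘L Phi A k m := by
  have h1 : (k + 1 - m).toNat = (k - m).toNat + 1 := by omega
  have h2 : m + ((k - m).toNat : ℤ) = k := by omega
  simp only [Phi, h1, List.range_succ, bind_pure_comp, List.map_eq_map, List.map_map, List.map_append, List.map_cons,
    List.map_nil, List.reverse_append, List.reverse_cons, List.reverse_nil, List.nil_append,
    List.singleton_append, List.prod_cons, h2, ContinuousLinearMap.mul_def]

theorem phi_comp (A : ℤ → (Euc n →L[ℝ] Euc n)) {m l : ℤ} (hlm : l ≤ m) :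
    ∀ k, m ≤ k → Phi A k l = Phi A k m ∘L Phi A m l := by
  refine Int.le_induction ?_ ?_
  · rw [phi_self]; ext x; simp
  · intro k hk ih
    rw [phi_succ A (le_trans hlm hk), phi_succ A hk, ih]
    ext x; simp

theorem phi_pred (A : ℤ → (Euc n →L[ℝ] Euc n)) {k m : ℤ} (h : k < m) :
    Phi A m k = Phi A m (k + 1) ∘L A k := by
  have h2 : Phi A (k+1) k = A k := by
    rw [phi_succ A (le_refl k), phi_self]; ext x; simp
  rw [phi_comp A (by omega : k ≤ k+1) m (by omega), h2]


variable {n : ℕ}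
open Submodule LinearMap

theorem mem_ker_clm {f : Euc n →L[ℝ] Euc n} {x : Euc n} :
    x ∈ LinearMap.ker (f : Euc n →ₗ[ℝ] Euc n) ↔ f x = 0 := LinearMap.mem_ker

/-- Extend a submodule `p` to one containing it; if `p ⊓ N = ⊥` the result is a
complement of `N`. -/
def extendCompl (p N : Submodule ℝ (Euc n)) : Submodule ℝ (Euc n) :=
  p ⊔ (Submodule.exists_isCompl (p ⊔ N)).choose

theorem le_extendCompl (p N : Submodule ℝ (Euc n)) : p ≤ extendCompl p N := le_sup_left

theorem isCompl_extendCompl {p N : Submodule ℝ (Euc n)} (h : Disjoint p N) :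
    IsCompl (extendCompl p N) N := by
  obtain hT := (Submodule.exists_isCompl (p ⊔ N)).choose_spec
  set T := (Submodule.exists_isCompl (p ⊔ N)).choose
  constructor
  · rw [disjoint_iff]
    ext x
    simp only [Submodule.mem_inf, Submodule.mem_bot]
    constructor
    · rintro ⟨hx1, hx2⟩
      rw [extendCompl, Submodule.mem_sup] at hx1
      obtain ⟨a, ha, t, ht, rfl⟩ := hx1
      have htm : t ∈ (p ⊔ N) ⊓ T := by
        refine ⟨?_, ht⟩
        have : t = (a + t) - a := by abel
        rw [this]
        exact Submodule.sub_mem _ (Submodule.mem_sup_right hx2) (Submodule.mem_sup_left ha)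
      rw [hT.disjoint.eq_bot] at htm
      simp only [Submodule.mem_bot] at htm
      subst htm
      have : a ∈ p ⊓ N := ⟨ha, by simpa using hx2⟩
      rw [h.eq_bot] at this
      simpa using this
    · rintro rfl; exact ⟨Submodule.zero_mem _, Submodule.zero_mem _⟩
  · rw [codisjoint_iff, extendCompl, sup_assoc, sup_comm T N, ← sup_assoc]
    exact hT.codisjoint.eq_top

open Classical in
/-- The projection onto `p` along `N` (as a continuous linear map), or `0` if not complementary. -/
def projOn (p N : Submodule ℝ (Euc n)) : Euc n →L[ℝ] Euc n :=
  if h : IsCompl p N then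
    LinearMap.toContinuousLinearMap (p.subtype ∘ₗ Submodule.projectionOnto p N h) else 0

theorem projOn_apply_left {p N : Submodule ℝ (Euc n)} (h : IsCompl p N) {x : Euc n}
    (hx : x ∈ p) : projOn p N x = x := by
  rw [projOn, dif_pos h]
  exact congrArg Subtype.val (Submodule.projectionOnto_apply_left h ⟨x, hx⟩)

theorem projOn_apply_right {p N : Submodule ℝ (Euc n)} (h : IsCompl p N) {x : Euc n}
    (hx : x ∈ N) : projOn p N x = 0 := by
  rw [projOn, dif_pos h]
  exact congrArg Subtype.val (Submodule.projectionOnto_apply_of_mem_right h hx)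

theorem projOn_mem {p N : Submodule ℝ (Euc n)} (h : IsCompl p N) (x : Euc n) :
    projOn p N x ∈ p := by
  rw [projOn, dif_pos h]; exact (Submodule.projectionOnto p N h x).2

theorem exists_add_projOn {p N : Submodule ℝ (Euc n)} (h : IsCompl p N) (x : Euc n) :
    x - projOn p N x ∈ N := by
  obtain ⟨a, ha, b, hb, rfl⟩ : ∃ a ∈ p, ∃ b ∈ N, a + b = x := by
    have hx : x ∈ p ⊔ N := by rw [h.codisjoint.eq_top]; trivial
    exact Submodule.mem_sup.mp hx
  rw [map_add, projOn_apply_left h ha, projOn_apply_right h hb, add_zero]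
  simpa using hb

theorem projOn_ker {p N : Submodule ℝ (Euc n)} (h : IsCompl p N) :
    LinearMap.ker (projOn p N : Euc n →ₗ[ℝ] Euc n) = N := by
  ext x
  constructor
  · intro hx
    have := exists_add_projOn h x
    rw [St9.mem_ker_clm.mp hx, sub_zero] at this
    exact this
  · intro hx
    exact St9.mem_ker_clm.mpr (projOn_apply_right h hx)

theorem projOn_range {p N : Submodule ℝ (Euc n)} (h : IsCompl p N) :
    LinearMap.range (projOn p N : Euc n →ₗ[ℝ] Euc n) = p := by
  apply le_antisymm
  · rintro x ⟨y, rfl⟩; exact projOn_mem h y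
  · intro x hx; exact ⟨x, projOn_apply_left h hx⟩

theorem projOn_proj {p N : Submodule ℝ (Euc n)} (h : IsCompl p N) :
    projOn p N ∘L projOn p N = projOn p N := by
  apply ContinuousLinearMap.ext
  intro x
  simp only [ContinuousLinearMap.comp_apply]
  exact projOn_apply_left h (projOn_mem h x)

theorem isCompl_range_ker_of_proj (f : Euc n →L[ℝ] Euc n) (h : f ∘L f = f) :
    IsCompl (LinearMap.range (f : Euc n →ₗ[ℝ] Euc n)) (LinearMap.ker (f : Euc n →ₗ[ℝ] Euc n)) := by
  have hf : ∀ x, f (f x) = f x := fun x => by simpa using DFunLike.congr_fun h x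
  constructor
  · rw [disjoint_iff]
    ext x
    simp only [Submodule.mem_inf, Submodule.mem_bot, LinearMap.mem_range, St9.mem_ker_clm,
      ContinuousLinearMap.coe_coe]
    constructor
    · rintro ⟨⟨y, rfl⟩, h2⟩
      rw [← hf y, h2]
    · rintro rfl; exact ⟨⟨0, map_zero f⟩, map_zero f⟩
  · rw [codisjoint_iff, eq_top_iff]
    intro x _
    have : x = f x + (x - f x) := by abel
    rw [this]
    exact Submodule.add_mem_sup ⟨x, rfl⟩ (by simp [hf])


end St9

set_option maxHeartbeats 2000000 in
/-- given an exponential dichotomy on `ℤ₋` with projection `P`, `m ∈ ℤ₋`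
and any complement `W` of `N(P(m))` containing `N(Φ(0,m))`, there is an invariant
projection family `Q` with `N(Q(m)) = N(P(m))`, `R(Q(m)) = W`, with respect to which the
equation has an exponential dichotomy on `ℤ₋`. -/
theorem statement9 {n : ℕ} (A P : ℤ → (Euc n →L[ℝ] Euc n)) (K α : ℝ)
    (hED : ExpDichotomyOn A {k : ℤ | k ≤ 0} P K α)
    (m : ℤ) (hm : m ≤ 0) (W : Submodule ℝ (Euc n))
    (hW : IsCompl W (LinearMap.ker (P m : Euc n →ₗ[ℝ] Euc n)))
    (hker : LinearMap.ker (Phi A 0 m : Euc n →ₗ[ℝ] Euc n) ≤ W) :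
    ∃ Q : ℤ → (Euc n →L[ℝ] Euc n),
      (∀ k : ℤ, k + 1 ≤ 0 → Q (k + 1) ∘L A k = A k ∘L Q k) ∧
      LinearMap.ker (Q m : Euc n →ₗ[ℝ] Euc n) = LinearMap.ker (P m : Euc n →ₗ[ℝ] Euc n) ∧
      LinearMap.range (Q m : Euc n →ₗ[ℝ] Euc n) = W ∧
      ∃ K' α' : ℝ, ExpDichotomyOn A {k : ℤ | k ≤ 0} Q K' α' := by
  classical
  have mem0 : ∀ k : ℤ, k ≤ 0 → k ∈ {k : ℤ | k ≤ 0} := fun k hk => hk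
  obtain ⟨Ψ, hΨ⟩ := hED.backward
  -- basic facts about P
  have hPproj : ∀ k : ℤ, k ≤ 0 → P k ∘L P k = P k := fun k hk => hED.proj k hk
  have hPinv : ∀ m' k : ℤ, m' ≤ k → k ≤ 0 →
      Phi A k m' ∘L P m' = P k ∘L Phi A k m' :=
    fun m' k h1 h2 => hED.invariance m' (le_trans h1 h2) k h2 h1
  have hAker : ∀ k : ℤ, k + 1 ≤ 0 → ∀ x ∈ LinearMap.ker (P k : Euc n →ₗ[ℝ] Euc n),
      A k x ∈ LinearMap.ker (P (k + 1) : Euc n →ₗ[ℝ] Euc n) := by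
    intro k hk1 x hx
    have h := hPinv k (k+1) (by omega) hk1
    have hph : Phi A (k+1) k = A k := by
      rw [St9.phi_succ A (le_refl k), St9.phi_self]
      apply ContinuousLinearMap.ext; intro y; simp
    rw [hph] at h
    have hpt := DFunLike.congr_fun h x
    simp only [ContinuousLinearMap.comp_apply] at hpt
    rw [St9.mem_ker_clm] at hx ⊢
    rw [← hpt, hx, map_zero]
  -- the data
  set Pi : Euc n →L[ℝ] Euc n := St9.projOn W (LinearMap.ker (P m : Euc n →ₗ[ℝ] Euc n)) with hPi
  set S : Euc n →L[ℝ] Euc n := Pi - P m with hSdef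
  set C : ℤ → Euc n →L[ℝ] Euc n := fun k => Ψ k m ∘L (S ∘L Phi A m k) with hCdef
  set R : ℕ → Submodule ℝ (Euc n) :=
    fun j => Nat.rec W (fun j' Rj =>
      St9.extendCompl ((Rj.map (A (m + j') : Euc n →ₗ[ℝ] Euc n)) ⊔ LinearMap.ker (Phi A 0 (m + j' + 1) : Euc n →ₗ[ℝ] Euc n))
        (LinearMap.ker (P (m + j' + 1) : Euc n →ₗ[ℝ] Euc n))) j with hRdef
  set Q : ℤ → Euc n →L[ℝ] Euc n :=
    fun k => if m ≤ k then St9.projOn (R (k - m).toNat) (LinearMap.ker (P k : Euc n →ₗ[ℝ] Euc n)) else P k + C k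
    with hQdef
  -- facts about S
  have hSker : ∀ x : Euc n, S x ∈ LinearMap.ker (P m : Euc n →ₗ[ℝ] Euc n) := by
    intro x
    have h1 : x - Pi x ∈ LinearMap.ker (P m : Euc n →ₗ[ℝ] Euc n) := St9.exists_add_projOn hW x
    rw [St9.mem_ker_clm] at h1 ⊢
    rw [map_sub] at h1
    have h2 : P m (P m x) = P m x := by
      simpa using DFunLike.congr_fun (hPproj m hm) x
    rw [hSdef]
    simp only [ContinuousLinearMap.sub_apply, map_sub, h2]
    rw [sub_eq_zero]
    rw [sub_eq_zero] at h1
    exact h1.symm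
  have hSP : ∀ x : Euc n, S (P m x) = S x := by
    intro x
    have h2 : P m (P m x) = P m x := by
      simpa using DFunLike.congr_fun (hPproj m hm) x
    have h3 : x - P m x ∈ LinearMap.ker (P m : Euc n →ₗ[ℝ] Euc n) := by
      rw [St9.mem_ker_clm, map_sub, h2, sub_self]
    have h4 : Pi (P m x) = Pi x := by
      have h5 : Pi (x - P m x) = 0 := St9.projOn_apply_right hW h3
      rw [map_sub, sub_eq_zero] at h5
      exact h5.symm
    rw [hSdef]
    simp only [ContinuousLinearMap.sub_apply, h2, h4]
  -- facts about C (k ≤ m)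
  have hCker : ∀ k ≤ m, ∀ x : Euc n, C k x ∈ LinearMap.ker (P k : Euc n →ₗ[ℝ] Euc n) := by
    intro k hk x
    have spec := hΨ k (le_trans hk hm) m hm hk
    have := (spec.2.1 (S (Phi A m k x)) (hSker _)).1
    simpa [hCdef] using this
  have hCP : ∀ k ≤ m, ∀ x : Euc n, C k (P k x) = C k x := by
    intro k hk x
    have h1 : Phi A m k (P k x) = P m (Phi A m k x) := by
      simpa using DFunLike.congr_fun (hPinv k m hk hm) x
    simp only [hCdef, ContinuousLinearMap.comp_apply, h1, hSP]
  have hCm : C m = S := by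
    apply ContinuousLinearMap.ext; intro x
    have h1 := (hΨ m hm m hm (le_refl m)).1 (S x) (hSker x)
    rw [St9.phi_self] at h1
    simp only [ContinuousLinearMap.one_apply] at h1
    simpa [hCdef, St9.phi_self] using h1
  have hR0 : R 0 = W := rfl
  have hQle : ∀ k ≤ m, Q k = P k + C k := by
    intro k hk
    rcases lt_or_eq_of_le hk with h | rfl
    · simp only [hQdef, if_neg (not_le.mpr h)]
    · rw [hCm]
      simp only [hQdef, if_pos (le_refl k), sub_self, Int.toNat_zero, hR0]
      rw [hSdef, hPi]
      abel
  -- the inductive construction above m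
  have hRcompl : ∀ j : ℕ, m + (j : ℤ) ≤ 0 →
      IsCompl (R j) (LinearMap.ker (P (m + (j : ℤ)) : Euc n →ₗ[ℝ] Euc n)) ∧
      LinearMap.ker (Phi A 0 (m + (j : ℤ)) : Euc n →ₗ[ℝ] Euc n) ≤ R j := by
    intro j
    induction j with
    | zero =>
        intro _
        simp only [Nat.cast_zero, add_zero, hR0]
        exact ⟨hW, hker⟩
    | succ j ih =>
        intro hj1
        have hj : m + (j : ℤ) ≤ 0 := by push_cast at hj1 ⊢; omega
        obtain ⟨ihc, ihk⟩ := ih hj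
        have hk1 : m + (j : ℤ) + 1 ≤ 0 := by push_cast at hj1; omega
        have hk0 : m + (j : ℤ) ≤ 0 := hj
        have hcast : (m + ((j + 1 : ℕ) : ℤ)) = m + (j : ℤ) + 1 := by push_cast; ring
        rw [hcast]
        have hRsucc : R (j + 1) = St9.extendCompl
            (((R j).map (A (m + (j : ℤ)) : Euc n →ₗ[ℝ] Euc n)) ⊔ LinearMap.ker (Phi A 0 (m + (j : ℤ) + 1) : Euc n →ₗ[ℝ] Euc n))
            (LinearMap.ker (P (m + (j : ℤ) + 1) : Euc n →ₗ[ℝ] Euc n)) := rfl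
        have hdisj : Disjoint
            (((R j).map (A (m + (j : ℤ)) : Euc n →ₗ[ℝ] Euc n)) ⊔ LinearMap.ker (Phi A 0 (m + (j : ℤ) + 1) : Euc n →ₗ[ℝ] Euc n))
            (LinearMap.ker (P (m + (j : ℤ) + 1) : Euc n →ₗ[ℝ] Euc n)) := by
          set k : ℤ := m + (j : ℤ) with hkdef
          rw [Submodule.disjoint_def]
          intro v hv1 hv2
          rw [Submodule.mem_sup] at hv1
          obtain ⟨a, ha, z, hz, rfl⟩ := hv1
          obtain ⟨y, hy, rfl⟩ := Submodule.mem_map.mp ha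
          have hphik : Phi A 0 k = Phi A 0 (k + 1) ∘L A k := St9.phi_pred A (by omega)
          have h1 : Phi A 0 (k + 1) (A k y + z) = Phi A 0 k y := by
            rw [map_add, St9.mem_ker_clm.mp hz, add_zero, hphik]
            rfl
          have h2 : P 0 (Phi A 0 (k + 1) (A k y + z)) = 0 := by
            have hpt := DFunLike.congr_fun (hPinv (k + 1) 0 (by omega) (le_refl 0)) (A k y + z)
            simp only [ContinuousLinearMap.comp_apply] at hpt
            rw [← hpt, St9.mem_ker_clm.mp (show A k y + z ∈ _ from hv2), map_zero]
          have h3 : Phi A 0 k (P k y) = 0 := by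
            have hpt := DFunLike.congr_fun (hPinv k 0 (by omega) (le_refl 0)) y
            simp only [ContinuousLinearMap.comp_apply] at hpt
            rw [hpt, ← h1, h2]
          have h4 : P k y ∈ R j := ihk (St9.mem_ker_clm.mpr h3)
          have h5 : y - P k y ∈ LinearMap.ker (P k : Euc n →ₗ[ℝ] Euc n) := by
            rw [St9.mem_ker_clm, map_sub]
            have hpp : P k (P k y) = P k y := by
              simpa using DFunLike.congr_fun (hPproj k hk0) y
            rw [hpp, sub_self]
          have h6 : y - P k y = 0 :=
            Submodule.disjoint_def.mp ihc.disjoint _ (Submodule.sub_mem _ hy h4) h5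
          have h7 : Phi A 0 k y = 0 := by
            have hy' : y = P k y := by rwa [sub_eq_zero] at h6
            rw [hy', h3]
          have h8 : Phi A 0 (k + 1) (A k y + z) = 0 := by rw [h1, h7]
          have h9 := (hΨ (k + 1) (mem0 _ hk1) 0 (mem0 0 (le_refl 0)) (by omega)).1 (A k y + z) hv2
          rw [h8, map_zero] at h9
          exact h9.symm
        exact ⟨hRsucc ▸ St9.isCompl_extendCompl hdisj,
          hRsucc ▸ le_trans le_sup_right (St9.le_extendCompl _ _)⟩
  have hQspec : ∀ k : ℤ, m ≤ k → k ≤ 0 →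
      IsCompl (R (k - m).toNat) (LinearMap.ker (P k : Euc n →ₗ[ℝ] Euc n)) ∧
      LinearMap.ker (Phi A 0 k : Euc n →ₗ[ℝ] Euc n) ≤ R (k - m).toNat := by
    intro k h1 h2
    have h3 : m + (((k - m).toNat : ℕ) : ℤ) = k := by omega
    have := hRcompl (k - m).toNat (by omega)
    rwa [h3] at this
  have hQge : ∀ k : ℤ, m ≤ k →
      Q k = St9.projOn (R (k - m).toNat) (LinearMap.ker (P k : Euc n →ₗ[ℝ] Euc n)) := by
    intro k h1; simp only [hQdef, if_pos h1]
  -- projection identities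
  have hQproj : ∀ k ≤ 0, Q k ∘L Q k = Q k := by
    intro k hk
    rcases le_or_gt m k with h | h
    · rw [hQge k h]
      exact St9.projOn_proj (hQspec k h hk).1
    · have hkm : k ≤ m := le_of_lt h
      rw [hQle k hkm]
      apply ContinuousLinearMap.ext; intro x
      have hp : P k (P k x) = P k x := by
        simpa using DFunLike.congr_fun (hPproj k hk) x
      have hpc : P k (C k x) = 0 := St9.mem_ker_clm.mp (hCker k hkm x)
      have hcp : C k (P k x) = C k x := hCP k hkm x
      have hcc : C k (C k x) = 0 := by
        rw [← hCP k hkm (C k x), hpc, map_zero]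
      simp only [ContinuousLinearMap.comp_apply, ContinuousLinearMap.add_apply, map_add,
        hp, hpc, hcp, hcc, add_zero]
  have hQker : ∀ k ≤ 0, LinearMap.ker (Q k : Euc n →ₗ[ℝ] Euc n) = LinearMap.ker (P k : Euc n →ₗ[ℝ] Euc n) := by
    intro k hk
    rcases le_or_gt m k with h | h
    · rw [hQge k h]
      exact St9.projOn_ker (hQspec k h hk).1
    · have hkm : k ≤ m := le_of_lt h
      ext x
      rw [St9.mem_ker_clm, St9.mem_ker_clm, hQle k hkm]
      have hp : P k (P k x) = P k x := by
        simpa using DFunLike.congr_fun (hPproj k hk) x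
      have hpc : P k (C k x) = 0 := St9.mem_ker_clm.mp (hCker k hkm x)
      constructor
      · intro h0
        have h1 : P k ((P k + C k) x) = P k x := by
          simp only [ContinuousLinearMap.add_apply, map_add, hp, hpc, add_zero]
        rw [h0, map_zero] at h1
        exact h1.symm
      · intro h0
        have hcc : C k x = 0 := by rw [← hCP k hkm x, h0, map_zero]
        simp only [ContinuousLinearMap.add_apply, h0, hcc, add_zero]
  have hQP : ∀ k ≤ 0, Q k ∘L P k = Q k := by
    intro k hk
    apply ContinuousLinearMap.ext; intro x
    have hp : P k (P k x) = P k x := by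
      simpa using DFunLike.congr_fun (hPproj k hk) x
    have h1 : x - P k x ∈ LinearMap.ker (Q k : Euc n →ₗ[ℝ] Euc n) := by
      rw [hQker k hk, St9.mem_ker_clm, map_sub, hp, sub_self]
    rw [St9.mem_ker_clm, map_sub, sub_eq_zero] at h1
    simp only [ContinuousLinearMap.comp_apply]
    exact h1.symm
  have hPQ : ∀ k ≤ 0, P k ∘L Q k = P k := by
    intro k hk
    apply ContinuousLinearMap.ext; intro x
    have hq : Q k (Q k x) = Q k x := by
      simpa using DFunLike.congr_fun (hQproj k hk) x
    have h1 : x - Q k x ∈ LinearMap.ker (P k : Euc n →ₗ[ℝ] Euc n) := by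
      rw [← hQker k hk, St9.mem_ker_clm, map_sub, hq, sub_self]
    rw [St9.mem_ker_clm, map_sub, sub_eq_zero] at h1
    simp only [ContinuousLinearMap.comp_apply]
    exact h1.symm
  -- invariance
  have hRstep : ∀ j : ℕ,
      ((R j).map (A (m + (j : ℤ)) : Euc n →ₗ[ℝ] Euc n) ⊔ LinearMap.ker (Phi A 0 (m + (j : ℤ) + 1) : Euc n →ₗ[ℝ] Euc n)) ≤ R (j + 1) :=
    fun j => St9.le_extendCompl _ _
  have hQinv : ∀ k : ℤ, k + 1 ≤ 0 → Q (k + 1) ∘L A k = A k ∘L Q k := by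
    intro k hk0
    rcases le_or_gt (k + 1) m with h | h
    · rw [hQle (k + 1) h, hQle k (by omega)]
      have hkm : k < m := by omega
      have hP : A k ∘L P k = P (k + 1) ∘L A k := by
        have hph : Phi A (k + 1) k = A k := by
          rw [St9.phi_succ A (le_refl k), St9.phi_self]
          apply ContinuousLinearMap.ext; intro y; simp
        have := hPinv k (k + 1) (by omega) hk0
        rwa [hph] at this
      apply ContinuousLinearMap.ext; intro x
      have e1 : P (k + 1) (A k x) = A k (P k x) := by
        have := DFunLike.congr_fun hP x
        simp only [ContinuousLinearMap.comp_apply] at this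
        exact this.symm
      have hphi : Phi A m k = Phi A m (k + 1) ∘L A k := St9.phi_pred A hkm
      have hy : S (Phi A m k x) ∈ LinearMap.ker (P m : Euc n →ₗ[ℝ] Euc n) := hSker _
      have spec_k := hΨ k (mem0 _ (by omega)) m hm (le_of_lt hkm)
      have spec_k1 := hΨ (k + 1) (mem0 _ (by omega)) m hm h
      have hu1 : Ψ k m (S (Phi A m k x)) ∈ LinearMap.ker (P k : Euc n →ₗ[ℝ] Euc n) :=
        (spec_k.2.1 _ hy).1
      have hu2 : Phi A m k (Ψ k m (S (Phi A m k x))) = S (Phi A m k x) :=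
        (spec_k.2.1 _ hy).2
      have hAu : A k (Ψ k m (S (Phi A m k x))) ∈ LinearMap.ker (P (k + 1) : Euc n →ₗ[ℝ] Euc n) :=
        hAker k hk0 _ hu1
      have hPhiAu : Phi A m (k + 1) (A k (Ψ k m (S (Phi A m k x)))) = S (Phi A m k x) := by
        have hpt := DFunLike.congr_fun hphi (Ψ k m (S (Phi A m k x)))
        simp only [ContinuousLinearMap.comp_apply] at hpt
        rw [← hpt, hu2]
      have hkey := spec_k1.1 _ hAu
      rw [hPhiAu] at hkey
      have e2 : C (k + 1) (A k x) = A k (C k x) := by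
        have lhs : C (k + 1) (A k x) = Ψ (k + 1) m (S (Phi A m k x)) := by
          simp only [hCdef, ContinuousLinearMap.comp_apply]
          congr 2
          rw [hphi]
          simp
        have rhs : C k x = Ψ k m (S (Phi A m k x)) := by
          simp only [hCdef, ContinuousLinearMap.comp_apply]
        rw [lhs, rhs]
        exact hkey
      simp only [ContinuousLinearMap.comp_apply, ContinuousLinearMap.add_apply, map_add, e1, e2]
    · have hmk : m ≤ k := by omega
      apply ContinuousLinearMap.ext; intro x
      obtain ⟨hcompl, hkerR⟩ := hQspec k hmk (by omega)
      obtain ⟨hcompl1, -⟩ := hQspec (k + 1) (by omega) hk0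
      have hq : Q k x ∈ R (k - m).toNat := by
        rw [hQge k hmk]; exact St9.projOn_mem hcompl x
      have hw : x - Q k x ∈ LinearMap.ker (P k : Euc n →ₗ[ℝ] Euc n) := by
        rw [hQge k hmk]; exact St9.exists_add_projOn hcompl x
      have hc : m + (((k - m).toNat : ℕ) : ℤ) = k := by omega
      have hAq : A k (Q k x) ∈ R ((k + 1) - m).toNat := by
        have hj : ((k + 1) - m).toNat = (k - m).toNat + 1 := by omega
        rw [hj]
        refine hRstep (k - m).toNat ?_
        apply Submodule.mem_sup_left
        rw [hc]
        exact Submodule.mem_map_of_mem hq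
      have hAw : A k (x - Q k x) ∈ LinearMap.ker (P (k + 1) : Euc n →ₗ[ℝ] Euc n) := hAker k hk0 _ hw
      have hsplit : A k x = A k (Q k x) + A k (x - Q k x) := by
        rw [← map_add]
        congr 1
        abel
      simp only [ContinuousLinearMap.comp_apply]
      rw [hQge (k + 1) (by omega), hsplit, map_add,
        St9.projOn_apply_left hcompl1 hAq, St9.projOn_apply_right hcompl1 hAw, add_zero]
  have hQPhi : ∀ m' k : ℤ, m' ≤ k → k ≤ 0 →
      Phi A k m' ∘L Q m' = Q k ∘L Phi A k m' := by
    intro m'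
    have main : ∀ k : ℤ, m' ≤ k → k ≤ 0 →
        Phi A k m' ∘L Q m' = Q k ∘L Phi A k m' := by
      refine Int.le_induction ?_ ?_
      · intro _
        rw [St9.phi_self]
        apply ContinuousLinearMap.ext; intro x; simp
      · intro k hk ih hk1
        have hk0 : k ≤ 0 := by omega
        rw [St9.phi_succ A hk]
        apply ContinuousLinearMap.ext; intro x
        have e1 := DFunLike.congr_fun (ih hk0) x
        have e2 := DFunLike.congr_fun (hQinv k hk1) (Phi A k m' x)
        simp only [ContinuousLinearMap.comp_apply] at e1 e2 ⊢
        rw [e1, ← e2]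
    exact fun k hk hk0 => main k hk hk0
  -- the bound on the correction
  have hK0 : (0:ℝ) < K := lt_of_lt_of_le one_pos hED.one_le_K
  have hCbound : ∀ k ≤ m, ‖C k‖ ≤ K * (‖S‖ * K) := by
    intro k hk
    have hk0 : k ≤ 0 := le_trans hk hm
    have spec := hΨ k hk0 m hm hk
    have heq : C k = (Ψ k m ∘L (1 - P m)) ∘L (S ∘L (Phi A m k ∘L P k)) := by
      apply ContinuousLinearMap.ext; intro x
      have h1 : Phi A m k (P k x) = P m (Phi A m k x) := by
        simpa using DFunLike.congr_fun (hPinv k m hk hm) x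
      have h2 : P m (S (Phi A m k x)) = 0 := St9.mem_ker_clm.mp (hSker _)
      simp only [hCdef, ContinuousLinearMap.comp_apply, ContinuousLinearMap.sub_apply,
        ContinuousLinearMap.one_apply, h1, hSP, h2, sub_zero]
    have hexp : Real.exp (-α * ((m : ℝ) - (k : ℝ))) ≤ 1 := by
      rw [Real.exp_le_one_iff]
      have : (0:ℝ) ≤ (m : ℝ) - (k : ℝ) := by
        have : (k : ℝ) ≤ (m : ℝ) := by exact_mod_cast hk
        linarith
      nlinarith [hED.alpha_pos]
    have hb1 : ‖Ψ k m ∘L (1 - P m)‖ ≤ K := by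
      refine le_trans spec.2.2 ?_
      nlinarith [Real.exp_pos (-α * ((m : ℝ) - (k : ℝ)))]
    have hb2 : ‖Phi A m k ∘L P k‖ ≤ K := by
      refine le_trans (hED.forward k hk0 m hm hk) ?_
      nlinarith [Real.exp_pos (-α * ((m : ℝ) - (k : ℝ)))]
    rw [heq]
    calc ‖(Ψ k m ∘L (1 - P m)) ∘L (S ∘L (Phi A m k ∘L P k))‖
        ≤ ‖Ψ k m ∘L (1 - P m)‖ * ‖S ∘L (Phi A m k ∘L P k)‖ :=
          ContinuousLinearMap.opNorm_comp_le _ _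
      _ ≤ ‖Ψ k m ∘L (1 - P m)‖ * (‖S‖ * ‖Phi A m k ∘L P k‖) := by
          have := ContinuousLinearMap.opNorm_comp_le S (Phi A m k ∘L P k)
          nlinarith [norm_nonneg (Ψ k m ∘L (1 - P m)), norm_nonneg S,
            norm_nonneg (Phi A m k ∘L P k), norm_nonneg (S ∘L (Phi A m k ∘L P k))]
      _ ≤ K * (‖S‖ * K) := by
          have h1 : ‖S‖ * ‖Phi A m k ∘L P k‖ ≤ ‖S‖ * K :=
            mul_le_mul_of_nonneg_left hb2 (norm_nonneg S)
          exact mul_le_mul hb1 h1 (by positivity) (le_of_lt hK0)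
  set B : ℝ := max (K * (‖S‖ * K)) ((Finset.Icc m 0).sup' (Finset.nonempty_Icc.mpr hm)
    fun k => ‖Q k - P k‖) with hBdef
  have hB : ∀ k ≤ 0, ‖Q k - P k‖ ≤ B := by
    intro k hk
    rcases le_or_gt m k with h | h
    · refine le_trans ?_ (le_max_right _ _)
      exact Finset.le_sup' (fun k => ‖Q k - P k‖) (Finset.mem_Icc.mpr ⟨h, hk⟩)
    · have hkm : k ≤ m := le_of_lt h
      refine le_trans ?_ (le_max_left _ _)
      have : Q k - P k = C k := by rw [hQle k hkm]; abel
      rw [this]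
      exact hCbound k hkm
  have hB0 : (0:ℝ) ≤ B := le_trans (by positivity) (le_max_left _ _)
  refine ⟨Q, hQinv, hQker m hm, ?_, (1 + B) * K, α, ?_⟩
  · rw [hQge m (le_refl m)]
    simp only [sub_self, Int.toNat_zero]
    exact St9.projOn_range hW
  constructor
  · nlinarith [hED.one_le_K]
  · exact hED.alpha_pos
  · exact fun k hk => hQproj k hk
  · -- rank_const
    intro k hk k' hk'
    have hfr : ∀ l : ℤ, l ≤ 0 → Module.finrank ℝ (LinearMap.range (Q l : Euc n →ₗ[ℝ] Euc n)) =
        Module.finrank ℝ (LinearMap.range (P l : Euc n →ₗ[ℝ] Euc n)) := by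
      intro l hl
      have h1 := Submodule.finrank_add_eq_of_isCompl
        (St9.isCompl_range_ker_of_proj (Q l) (hQproj l hl))
      have h2 := Submodule.finrank_add_eq_of_isCompl
        (St9.isCompl_range_ker_of_proj (P l) (hPproj l hl))
      rw [hQker l hl] at h1
      omega
    rw [hfr k hk, hfr k' hk']
    exact hED.rank_const k hk k' hk'
  · exact fun m' hm' k hk h => hQPhi m' k h hk
  · -- forward
    intro m' hm' k hk h
    have hid : Phi A k m' ∘L Q m' =
        Phi A k m' ∘L P m' + (Q k - P k) ∘L (Phi A k m' ∘L P m') := by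
      apply ContinuousLinearMap.ext; intro x
      have hq := DFunLike.congr_fun (hQPhi m' k h hk) x
      have hp := DFunLike.congr_fun (hPinv m' k h hk) x
      simp only [ContinuousLinearMap.comp_apply] at hq hp
      have hqp := DFunLike.congr_fun (hQP k hk) (Phi A k m' x)
      have hpp : P k (P k (Phi A k m' x)) = P k (Phi A k m' x) := by
        simpa using DFunLike.congr_fun (hPproj k hk) (Phi A k m' x)
      simp only [ContinuousLinearMap.comp_apply] at hqp
      simp only [ContinuousLinearMap.comp_apply, ContinuousLinearMap.add_apply,
        ContinuousLinearMap.sub_apply, hq, hp, hqp, hpp]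
      abel
    rw [hid]
    have e1 : ‖Phi A k m' ∘L P m'‖ ≤ K * Real.exp (-α * ((k : ℝ) - (m' : ℝ))) :=
      hED.forward m' hm' k hk h
    have e2 : ‖Q k - P k‖ ≤ B := hB k hk
    calc ‖Phi A k m' ∘L P m' + (Q k - P k) ∘L (Phi A k m' ∘L P m')‖
        ≤ ‖Phi A k m' ∘L P m'‖ + ‖(Q k - P k) ∘L (Phi A k m' ∘L P m')‖ := norm_add_le _ _
      _ ≤ ‖Phi A k m' ∘L P m'‖ + ‖Q k - P k‖ * ‖Phi A k m' ∘L P m'‖ := by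
          have := ContinuousLinearMap.opNorm_comp_le (Q k - P k) (Phi A k m' ∘L P m')
          linarith
      _ ≤ (1 + B) * K * Real.exp (-α * ((k : ℝ) - (m' : ℝ))) := by
          nlinarith [norm_nonneg (Phi A k m' ∘L P m'), norm_nonneg (Q k - P k),
            Real.exp_pos (-α * ((k : ℝ) - (m' : ℝ))), hB0]
  · -- bijOn
    intro k hk hk1
    have e1 : (LinearMap.ker (Q k : Euc n →ₗ[ℝ] Euc n) : Set (Euc n)) = (LinearMap.ker (P k : Euc n →ₗ[ℝ] Euc n) : Set (Euc n)) := by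
      rw [hQker k hk]
    have e2 : (LinearMap.ker (Q (k+1) : Euc n →ₗ[ℝ] Euc n) : Set (Euc n)) =
        (LinearMap.ker (P (k+1) : Euc n →ₗ[ℝ] Euc n) : Set (Euc n)) := by rw [hQker (k+1) hk1]
    rw [e1, e2]
    exact hED.bijOn k hk hk1
  · -- backward
    refine ⟨Ψ, ?_⟩
    intro m' hm' k hk h
    obtain ⟨b1, b2, b3⟩ := hΨ m' hm' k hk h
    refine ⟨?_, ?_, ?_⟩
    · intro x hx
      exact b1 x (by rwa [hQker m' hm'] at hx)
    · intro x hx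
      have hx' : x ∈ LinearMap.ker (P k : Euc n →ₗ[ℝ] Euc n) := by rwa [hQker k hk] at hx
      exact ⟨by rw [hQker m' hm']; exact (b2 x hx').1, (b2 x hx').2⟩
    · have hid : Ψ m' k ∘L (1 - Q k) =
          Ψ m' k ∘L (1 - P k) - (Ψ m' k ∘L (1 - P k)) ∘L (Q k - P k) := by
        apply ContinuousLinearMap.ext; intro x
        have hpq := DFunLike.congr_fun (hPQ k hk) x
        simp only [ContinuousLinearMap.comp_apply] at hpq
        simp only [ContinuousLinearMap.comp_apply, ContinuousLinearMap.sub_apply,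
          ContinuousLinearMap.one_apply, map_sub, hpq]
        have hpp : P k (P k x) = P k x := by
          simpa using DFunLike.congr_fun (hPproj k hk) x
        rw [hpp]
        abel
      rw [hid]
      have e2 : ‖Q k - P k‖ ≤ B := hB k hk
      calc ‖Ψ m' k ∘L (1 - P k) - (Ψ m' k ∘L (1 - P k)) ∘L (Q k - P k)‖
          ≤ ‖Ψ m' k ∘L (1 - P k)‖ + ‖(Ψ m' k ∘L (1 - P k)) ∘L (Q k - P k)‖ :=
            norm_sub_le _ _
        _ ≤ ‖Ψ m' k ∘L (1 - P k)‖ + ‖Ψ m' k ∘L (1 - P k)‖ * ‖Q k - P k‖ := by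
            have := ContinuousLinearMap.opNorm_comp_le (Ψ m' k ∘L (1 - P k)) (Q k - P k)
            linarith
        _ ≤ (1 + B) * K * Real.exp (-α * ((k : ℝ) - (m' : ℝ))) := by
            nlinarith [norm_nonneg (Ψ m' k ∘L (1 - P k)), b3,
              Real.exp_pos (-α * ((k : ℝ) - (m' : ℝ))), hB0, e2]
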